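/- The map T restricted to (0, 1/2] is a strictly increasing bijection onto (0, 1]; define y_0 = 1/2 and, for n ≥ 0, let y_{n+1} be the unique point of (0, 1/2] with T(y_{n+1}) = y_n. Then there exist constants υ1 ≥ υ2 > 0 such that e^{−υ1 n^γ} ≤ y_n ≤ e^{−υ2 n^γ} for every integer n ≥ 1. -/

import Mathlib

open MeasureTheory Set

/-- The interval map `T` of the example: `T(x) = x (1 + c / |log x|^β)` on `(0, 1/2]`
with `β = 1/γ - 1`, `c = (log 2)^β`, `T(x) = 2x - 1` on `(1/2, 1]`, and `T(0) = 0`. -/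
noncomputable def Tmap (γ : ℝ) (x : ℝ) : ℝ :=
  if x ≤ 0 then 0
  else if x ≤ 1 / 2 then x * (1 + (Real.log 2) ^ (1 / γ - 1) / |Real.log x| ^ (1 / γ - 1))
  else 2 * x - 1


section Aux

variable {γ : ℝ}

private lemma aux_log2 : (0:ℝ) < Real.log 2 := Real.log_pos (by norm_num)

private lemma aux_beta (hγ0 : 0 < γ) (hγ1 : γ ≤ 1) : 0 ≤ 1/γ - 1 := by
  have : (1:ℝ) ≤ 1/γ := one_le_one_div hγ0 hγ1
  linarith

private lemma aux_c_pos (hγ0 : 0 < γ) (hγ1 : γ ≤ 1) :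
    0 < Real.log 2 ^ (1/γ - 1) := Real.rpow_pos_of_pos aux_log2 _

private lemma aux_neglog {x : ℝ} (hx : x ∈ Set.Ioc (0:ℝ) (1/2)) :
    Real.log 2 ≤ -Real.log x := by
  have h := Real.log_le_log hx.1 hx.2
  have h2 : Real.log (1/2 : ℝ) = -Real.log 2 := by
    rw [one_div, Real.log_inv]
  linarith

private lemma aux_neglog_pos {x : ℝ} (hx : x ∈ Set.Ioc (0:ℝ) (1/2)) :
    0 < -Real.log x := lt_of_lt_of_le aux_log2 (aux_neglog hx)

/-- the ratio `c / (-log x)^β` is in `(0,1]` on `(0,1/2]`. -/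
private lemma aux_ratio (hγ0 : 0 < γ) (hγ1 : γ ≤ 1) {x : ℝ} (hx : x ∈ Set.Ioc (0:ℝ) (1/2)) :
    Real.log 2 ^ (1/γ - 1) / (-Real.log x) ^ (1/γ - 1) ∈ Set.Ioc (0:ℝ) 1 := by
  have hd : (0:ℝ) < (-Real.log x) ^ (1/γ - 1) :=
    Real.rpow_pos_of_pos (aux_neglog_pos hx) _
  constructor
  · exact div_pos (aux_c_pos hγ0 hγ1) hd
  · rw [div_le_one hd]
    exact Real.rpow_le_rpow aux_log2.le (aux_neglog hx) (aux_beta hγ0 hγ1)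

private lemma aux_Tmap_eq {x : ℝ} (hx : x ∈ Set.Ioc (0:ℝ) (1/2)) :
    Tmap γ x = x * (1 + Real.log 2 ^ (1/γ - 1) / (-Real.log x) ^ (1/γ - 1)) := by
  have h1 : ¬ x ≤ 0 := not_le.2 hx.1
  have hlt : Real.log x < 0 := Real.log_neg hx.1 (by linarith [hx.2])
  rw [Tmap, if_neg h1, if_pos hx.2, abs_of_neg hlt]

private lemma aux_Tmap_bounds (hγ0 : 0 < γ) (hγ1 : γ ≤ 1) {x : ℝ}
    (hx : x ∈ Set.Ioc (0:ℝ) (1/2)) : x < Tmap γ x ∧ Tmap γ x ≤ 2 * x := by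
  obtain ⟨hr0, hr1⟩ := aux_ratio hγ0 hγ1 hx
  rw [aux_Tmap_eq hx]
  constructor
  · nlinarith [hx.1]
  · nlinarith [hx.1]

private lemma aux_mono (hγ0 : 0 < γ) (hγ1 : γ ≤ 1) :
    StrictMonoOn (Tmap γ) (Set.Ioc (0 : ℝ) (1 / 2)) := by
  intro x hx y hy hxy
  rw [aux_Tmap_eq hx, aux_Tmap_eq hy]
  set c := Real.log 2 ^ (1/γ - 1) with hc
  have hFx : 0 < 1 + c / (-Real.log x) ^ (1/γ - 1) := by
    have := (aux_ratio hγ0 hγ1 hx).1; linarith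
  have hmono : c / (-Real.log x) ^ (1/γ - 1) ≤ c / (-Real.log y) ^ (1/γ - 1) := by
    apply div_le_div_of_nonneg_left (aux_c_pos hγ0 hγ1).le
      (Real.rpow_pos_of_pos (aux_neglog_pos hy) _)
    exact Real.rpow_le_rpow (aux_neglog_pos hy).le
      (by linarith [Real.log_le_log hx.1 hxy.le]) (aux_beta hγ0 hγ1)
  calc x * (1 + c / (-Real.log x) ^ (1/γ - 1))
      < y * (1 + c / (-Real.log x) ^ (1/γ - 1)) := by
        exact mul_lt_mul_of_pos_right hxy hFx
    _ ≤ y * (1 + c / (-Real.log y) ^ (1/γ - 1)) := by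
        apply mul_le_mul_of_nonneg_left (by linarith) hy.1.le

private lemma aux_Tmap_half (hγ0 : 0 < γ) (hγ1 : γ ≤ 1) : Tmap γ (1/2 : ℝ) = 1 := by
  rw [aux_Tmap_eq (by norm_num : (1/2:ℝ) ∈ Set.Ioc (0:ℝ) (1/2))]
  rw [show -Real.log (1/2:ℝ) = Real.log 2 by rw [one_div, Real.log_inv]; ring]
  rw [div_self (aux_c_pos hγ0 hγ1).ne']
  norm_num

private lemma aux_bij (hγ0 : 0 < γ) (hγ1 : γ ≤ 1) :
    Set.BijOn (Tmap γ) (Set.Ioc (0 : ℝ) (1 / 2)) (Set.Ioc (0 : ℝ) 1) := by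
  refine ⟨?_, (aux_mono hγ0 hγ1).injOn, ?_⟩
  · intro x hx
    obtain ⟨h1, h2⟩ := aux_Tmap_bounds hγ0 hγ1 hx
    exact ⟨lt_trans hx.1 h1, by linarith [hx.2]⟩
  · intro t ht
    have ht2 : t/2 ≤ 1/2 := by linarith [ht.2]
    have htpos : 0 < t/2 := by linarith [ht.1]
    have hcont : ContinuousOn (Tmap γ) (Set.Icc (t/2) (1/2)) := by
      have hsub : Set.Icc (t/2) (1/2) ⊆ Set.Ioc (0:ℝ) (1/2) := fun z hz =>
        ⟨lt_of_lt_of_le htpos hz.1, hz.2⟩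
      have : ContinuousOn
          (fun x => x * (1 + Real.log 2 ^ (1/γ - 1) / (-Real.log x) ^ (1/γ - 1)))
          (Set.Icc (t/2) (1/2)) := by
        apply continuousOn_id.mul
        apply continuousOn_const.add
        apply continuousOn_const.div
        · apply ContinuousOn.rpow_const
          · exact ((Real.continuousOn_log.mono (fun z hz => by
              simp only [Set.mem_compl_iff, Set.mem_singleton_iff]
              exact (hsub hz).1.ne')).neg)
          · intro z hz; exact Or.inr (aux_beta hγ0 hγ1)
        · intro z hz
          exact (Real.rpow_pos_of_pos (aux_neglog_pos (hsub hz)) _).ne'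
      exact this.congr (fun z hz => aux_Tmap_eq (hsub hz))
    have hmem : t ∈ Set.Icc (Tmap γ (t/2)) (Tmap γ (1/2)) := by
      constructor
      · have := (aux_Tmap_bounds hγ0 hγ1 ⟨htpos, ht2⟩).2; linarith
      · rw [aux_Tmap_half hγ0 hγ1]; exact ht.2
    obtain ⟨x, hx, hTx⟩ := intermediate_value_Icc ht2 hcont hmem
    exact ⟨x, ⟨lt_of_lt_of_le htpos hx.1, hx.2⟩, hTx⟩

end Aux

private lemma aux_exp_aid (z : ℝ) : Real.exp z ≤ 1 + z * Real.exp z := by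
  have h := Real.add_one_le_exp (-z)
  have h2 := Real.exp_pos z
  have h3 : Real.exp (-z) * Real.exp z = 1 := by rw [← Real.exp_add]; simp
  nlinarith

set_option maxHeartbeats 1000000 in
private lemma aux_part3 {γ : ℝ} (hγ0 : 0 < γ) (hγ1 : γ ≤ 1) (y : ℕ → ℝ) (hy0 : y 0 = 1/2)
    (hrec : ∀ n : ℕ, y (n + 1) ∈ Set.Ioc (0 : ℝ) (1 / 2) ∧ Tmap γ (y (n + 1)) = y n) :
    ∃ υ1 υ2 : ℝ, 0 < υ2 ∧ υ2 ≤ υ1 ∧ ∀ n : ℕ, 1 ≤ n →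
      Real.exp (-υ1 * (n : ℝ) ^ γ) ≤ y n ∧ y n ≤ Real.exp (-υ2 * (n : ℝ) ^ γ) := by
  have hβ : 0 ≤ 1/γ - 1 := aux_beta hγ0 hγ1
  have hc : 0 < Real.log 2 ^ (1/γ - 1) := aux_c_pos hγ0 hγ1
  set c : ℝ := Real.log 2 ^ (1/γ - 1) with hcdef
  have hy : ∀ n, y n ∈ Set.Ioc (0:ℝ) (1/2) := by
    intro n
    cases n with
    | zero => rw [hy0]; constructor <;> norm_num
    | succ k => exact (hrec k).1
  set L : ℕ → ℝ := fun n => -Real.log (y n) with hLdef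
  have hL2 : ∀ n, Real.log 2 ≤ L n := fun n => aux_neglog (hy n)
  have hLpos : ∀ n, 0 < L n := fun n => aux_neglog_pos (hy n)
  set r : ℕ → ℝ := fun n => c / (L n) ^ (1/γ - 1) with hrdef
  have hr : ∀ n, r n ∈ Set.Ioc (0:ℝ) 1 := fun n => aux_ratio hγ0 hγ1 (hy n)
  -- the basic recurrence for L
  have hstep : ∀ n, L (n+1) = L n + Real.log (1 + r (n+1)) := by
    intro n
    have h1 : y n = y (n+1) * (1 + r (n+1)) := by
      rw [← (hrec n).2, aux_Tmap_eq (hy (n+1))]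
    have h2 : Real.log (y n) = Real.log (y (n+1)) + Real.log (1 + r (n+1)) := by
      rw [h1, Real.log_mul (hy (n+1)).1.ne' (by linarith [(hr (n+1)).1] : (1:ℝ) + r (n+1) ≠ 0)]
    simp only [hLdef]
    linarith
  have hincr : ∀ n, 0 ≤ Real.log (1 + r (n+1)) :=
    fun n => Real.log_nonneg (by linarith [(hr (n+1)).1])
  have hmonoL : ∀ n, L n ≤ L (n+1) := by
    intro n; rw [hstep n]; linarith [hincr n]
  have hdpos : ∀ n, (0:ℝ) < (L n) ^ (1/γ - 1) := fun n => Real.rpow_pos_of_pos (hLpos n) _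
  have hup1 : ∀ n, L (n+1) ≤ L n + c / (L n) ^ (1/γ - 1) := by
    intro n
    have h1 : Real.log (1 + r (n+1)) ≤ r (n+1) := by
      have := Real.log_le_sub_one_of_pos (by linarith [(hr (n+1)).1] : (0:ℝ) < 1 + r (n+1))
      linarith
    have h2 : r (n+1) ≤ c / (L n) ^ (1/γ - 1) := by
      simp only [hrdef]
      exact div_le_div_of_nonneg_left hc.le (hdpos n)
        (Real.rpow_le_rpow (hLpos n).le (hmonoL n) hβ)
    rw [hstep n]; linarith
  have hup2 : ∀ n, L (n+1) ≤ 2 * L n := by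
    intro n
    have h1 : Real.log (1 + r (n+1)) ≤ Real.log 2 :=
      Real.log_le_log (by linarith [(hr (n+1)).1]) (by linarith [(hr (n+1)).2])
    rw [hstep n]; linarith [hL2 n]
  -- lower bound for the increment
  have h21 : (1:ℝ) ≤ (2:ℝ) ^ (1/γ - 1 + 1) := by
    rw [show (1:ℝ) = (2:ℝ) ^ (0:ℝ) from (Real.rpow_zero 2).symm]
    exact Real.rpow_le_rpow_of_exponent_le one_le_two (by linarith)
  have hlow : ∀ n, L n + (c / (2:ℝ) ^ (1/γ - 1 + 1)) / (L n) ^ (1/γ - 1) ≤ L (n+1) := by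
    intro n
    have ht0 := (hr (n+1)).1
    have ht1 := (hr (n+1)).2
    have h1 : r (n+1) / 2 ≤ Real.log (1 + r (n+1)) := by
      have hpos : (0:ℝ) < 1 + r (n+1) := by linarith
      have h := Real.one_sub_inv_le_log_of_pos hpos
      have hinv : (1 + r (n+1)) * (1 + r (n+1))⁻¹ = 1 := mul_inv_cancel₀ hpos.ne'
      nlinarith
    have h2a : (L (n+1)) ^ (1/γ - 1) ≤ 2 ^ (1/γ - 1) * (L n) ^ (1/γ - 1) := by
      rw [← Real.mul_rpow (by norm_num) (hLpos n).le]
      exact Real.rpow_le_rpow (hLpos (n+1)).le (hup2 n) hβ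
    have h2b : c / (2 ^ (1/γ - 1) * (L n) ^ (1/γ - 1)) ≤ r (n+1) :=
      div_le_div_of_nonneg_left hc.le (hdpos (n+1)) h2a
    have hrw : (c / (2:ℝ) ^ (1/γ - 1 + 1)) / (L n) ^ (1/γ - 1)
        = (c / (2 ^ (1/γ - 1) * (L n) ^ (1/γ - 1))) / 2 := by
      rw [Real.rpow_add (by norm_num : (0:ℝ) < 2), Real.rpow_one]
      have h2β : ((2:ℝ) ^ (1/γ - 1)) ≠ 0 := (Real.rpow_pos_of_pos (by norm_num) _).ne'
      field_simp
    rw [hstep n, hrw]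
    linarith
  -- pass to M n = L n ^ (1/γ)
  have hsplit : ∀ n, (L n) ^ (1/γ) = (L n) ^ (1/γ - 1) * L n := by
    intro n
    have h := Real.rpow_add_one (hLpos n).ne' (1/γ - 1)
    rw [show (1/γ - 1 + 1) = 1/γ by ring] at h
    exact h
  set M : ℕ → ℝ := fun n => (L n) ^ (1/γ) with hMdef
  have hMpos : ∀ n, 0 < M n := fun n => Real.rpow_pos_of_pos (hLpos n) _
  have hp1 : (1:ℝ) ≤ 1/γ := by linarith
  have hp0 : (0:ℝ) < 1/γ := by linarith
  set a : ℝ := c / (2:ℝ) ^ (1/γ - 1 + 1) with hadef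
  have ha0 : 0 < a := div_pos hc (Real.rpow_pos_of_pos (by norm_num) _)
  have hfact : ∀ (n : ℕ) (e : ℝ), L n + e / (L n) ^ (1/γ - 1) = L n * (1 + e / (L n) ^ (1/γ)) := by
    intro n e
    have key : e / L n ^ (1/γ) * L n = e / L n ^ (1/γ - 1) := by
      rw [hsplit n, ← div_div, div_mul_cancel₀ _ (hLpos n).ne']
    linear_combination -key
  -- lower bound on M-increments (Bernoulli)
  have hMlow : ∀ n, M n + (1/γ) * a ≤ M (n+1) := by
    intro n
    have hv : 0 ≤ a / (L n) ^ (1/γ) := le_of_lt (div_pos ha0 (hMpos n))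
    have hb : 1 + (1/γ) * (a / (L n) ^ (1/γ)) ≤ (1 + a / (L n) ^ (1/γ)) ^ (1/γ) :=
      one_add_mul_self_le_rpow_one_add (by linarith) hp1
    have hkey : (L n * (1 + a / (L n) ^ (1/γ))) ^ (1/γ)
        = M n * (1 + a / (L n) ^ (1/γ)) ^ (1/γ) :=
      Real.mul_rpow (hLpos n).le (by linarith)
    have hMv : M n * (a / (L n) ^ (1/γ)) = a := by
      show (L n) ^ (1/γ) * (a / (L n) ^ (1/γ)) = a
      rw [mul_comm, div_mul_cancel₀ a (hMpos n).ne']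
    calc M n + (1/γ) * a
        = M n * (1 + (1/γ) * (a / (L n) ^ (1/γ))) := by
          linear_combination (-(1/γ)) * hMv
      _ ≤ M n * (1 + a / (L n) ^ (1/γ)) ^ (1/γ) :=
          mul_le_mul_of_nonneg_left hb (hMpos n).le
      _ = (L n * (1 + a / (L n) ^ (1/γ))) ^ (1/γ) := hkey.symm
      _ = (L n + a / (L n) ^ (1/γ - 1)) ^ (1/γ) := by rw [← hfact]
      _ ≤ (L (n+1)) ^ (1/γ) := by
          apply Real.rpow_le_rpow _ (hlow n) hp0.le
          exact add_nonneg (hLpos n).le (div_pos ha0 (hdpos n)).le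
  -- upper bound on M-increments
  set C : ℝ := (1/γ) * c * Real.exp ((1/γ) / Real.log 2) with hCdef
  have hC0 : 0 < C := by positivity
  have hMup : ∀ n, M (n+1) ≤ M n + C := by
    intro n
    set u : ℝ := c / (L n) ^ (1/γ) with hudef
    have hu0 : 0 ≤ u := le_of_lt (div_pos hc (hMpos n))
    have huB : u ≤ 1 / Real.log 2 := by
      have h1 : c / (Real.log 2) ^ (1/γ) = 1 / Real.log 2 := by
        rw [hcdef, ← Real.rpow_sub aux_log2, show (1/γ - 1 - 1/γ) = (-1:ℝ) by ring,
          Real.rpow_neg_one, one_div]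
      rw [← h1]
      apply div_le_div_of_nonneg_left hc.le (Real.rpow_pos_of_pos aux_log2 _)
      exact Real.rpow_le_rpow aux_log2.le (hL2 n) hp0.le
    have hMu : M n * u = c := by
      show (L n) ^ (1/γ) * (c / (L n) ^ (1/γ)) = c
      rw [mul_comm, div_mul_cancel₀ c (hMpos n).ne']
    have h1 : (1 + u) ^ (1/γ) ≤ Real.exp (u * (1/γ)) := by
      rw [Real.exp_mul]
      exact Real.rpow_le_rpow (by linarith) (by linarith [Real.add_one_le_exp u]) hp0.le
    have h2 : Real.exp (u * (1/γ)) ≤ 1 + (u * (1/γ)) * Real.exp (u * (1/γ)) := aux_exp_aid _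
    have h3 : Real.exp (u * (1/γ)) ≤ Real.exp ((1/γ) / Real.log 2) := by
      apply Real.exp_le_exp.2
      calc u * (1/γ) ≤ (1/Real.log 2) * (1/γ) := mul_le_mul_of_nonneg_right huB hp0.le
        _ = (1/γ) / Real.log 2 := by ring
    have hexp0 : 0 < Real.exp (u * (1/γ)) := Real.exp_pos _
    calc M (n+1) = (L (n+1)) ^ (1/γ) := rfl
      _ ≤ (L n + c / (L n) ^ (1/γ - 1)) ^ (1/γ) :=
          Real.rpow_le_rpow (hLpos (n+1)).le (hup1 n) hp0.le
      _ = (L n * (1 + u)) ^ (1/γ) := by rw [hfact]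
      _ = M n * (1 + u) ^ (1/γ) := Real.mul_rpow (hLpos n).le (by linarith)
      _ ≤ M n * (1 + (u * (1/γ)) * Real.exp (u * (1/γ))) :=
          mul_le_mul_of_nonneg_left (h1.trans h2) (hMpos n).le
      _ = M n + (M n * u) * ((1/γ) * Real.exp (u * (1/γ))) := by ring
      _ = M n + c * ((1/γ) * Real.exp (u * (1/γ))) := by rw [hMu]
      _ ≤ M n + c * ((1/γ) * Real.exp ((1/γ) / Real.log 2)) := by
          have h4 := mul_le_mul_of_nonneg_left h3 hp0.le
          have h5 := mul_le_mul_of_nonneg_left h4 hc.le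
          linarith
      _ = M n + C := by rw [hCdef]; ring
  -- iterate
  have hMub : ∀ n : ℕ, M n ≤ M 0 + C * n := by
    intro n
    induction n with
    | zero => simp
    | succ k ih =>
      have := hMup k
      push_cast
      push_cast at ih
      linarith
  have hMlb : ∀ n : ℕ, M 0 + ((1/γ) * a) * n ≤ M n := by
    intro n
    induction n with
    | zero => simp
    | succ k ih =>
      have := hMlow k
      push_cast
      push_cast at ih
      linarith
  -- conclude
  have hpa : 0 < (1/γ) * a := by positivity
  have hpaC : (1/γ) * a ≤ M 0 + C := by
    have hac : a ≤ c := by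
      rw [hadef]
      exact div_le_self hc.le h21
    have he1 : (1:ℝ) ≤ Real.exp ((1/γ) / Real.log 2) :=
      Real.one_le_exp (by positivity)
    have hCge : (1/γ) * a ≤ C := by
      calc (1/γ) * a ≤ (1/γ) * c := mul_le_mul_of_nonneg_left hac hp0.le
        _ = ((1/γ) * c) * 1 := by ring
        _ ≤ ((1/γ) * c) * Real.exp ((1/γ) / Real.log 2) :=
            mul_le_mul_of_nonneg_left he1 (by positivity)
        _ = C := by rw [hCdef]
    linarith [(hMpos 0).le, hCge]
  refine ⟨(M 0 + C) ^ γ, ((1/γ) * a) ^ γ, Real.rpow_pos_of_pos hpa _,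
    Real.rpow_le_rpow hpa.le hpaC hγ0.le, ?_⟩
  intro n hn
  have hn1 : (1:ℝ) ≤ (n:ℝ) := by exact_mod_cast hn
  have hLeq : L n = (M n) ^ γ := by
    show L n = ((L n) ^ (1/γ)) ^ γ
    rw [← Real.rpow_mul (hLpos n).le, one_div, inv_mul_cancel₀ hγ0.ne', Real.rpow_one]
  have hM0C : (0:ℝ) ≤ M 0 + C := by linarith [(hMpos 0).le, hC0.le]
  have hub : L n ≤ (M 0 + C) ^ γ * (n:ℝ) ^ γ := by
    have h1 : M n ≤ (M 0 + C) * n := by nlinarith [hMub n, hC0, (hMpos 0).le]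
    calc L n = (M n) ^ γ := hLeq
      _ ≤ ((M 0 + C) * n) ^ γ := Real.rpow_le_rpow (hMpos n).le h1 hγ0.le
      _ = (M 0 + C) ^ γ * (n:ℝ) ^ γ := Real.mul_rpow hM0C (Nat.cast_nonneg n)
  have hlb : ((1/γ) * a) ^ γ * (n:ℝ) ^ γ ≤ L n := by
    have h1 : (1/γ) * a * n ≤ M n := by nlinarith [hMlb n, (hMpos 0).le]
    calc ((1/γ) * a) ^ γ * (n:ℝ) ^ γ
        = ((1/γ) * a * n) ^ γ := (Real.mul_rpow hpa.le (Nat.cast_nonneg n)).symm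
      _ ≤ (M n) ^ γ :=
          Real.rpow_le_rpow (mul_nonneg hpa.le (Nat.cast_nonneg n)) h1 hγ0.le
      _ = L n := hLeq.symm
  have hyn : y n = Real.exp (-(L n)) := by
    have h : -(L n) = Real.log (y n) := by simp [hLdef]
    rw [h, Real.exp_log (hy n).1]
  constructor
  · rw [hyn]
    exact Real.exp_le_exp.2 (by linarith)
  · rw [hyn]
    exact Real.exp_le_exp.2 (by linarith)

/-- `T` restricted to `(0, 1/2]` is a strictly increasing bijection onto `(0, 1]`; defining
`y_0 = 1/2` and `y_{n+1} ∈ (0, 1/2]` as the unique point with `T(y_{n+1}) = y_n`, there are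
`υ1 ≥ υ2 > 0` such that `e^{-υ1 n^γ} ≤ y_n ≤ e^{-υ2 n^γ}` for every `n ≥ 1`. -/
theorem stmt4 (γ : ℝ) (hγ0 : 0 < γ) (hγ1 : γ ≤ 1) :
    StrictMonoOn (Tmap γ) (Set.Ioc (0 : ℝ) (1 / 2)) ∧
    Set.BijOn (Tmap γ) (Set.Ioc (0 : ℝ) (1 / 2)) (Set.Ioc (0 : ℝ) 1) ∧
    ∀ y : ℕ → ℝ, y 0 = 1 / 2 →
      (∀ n : ℕ, y (n + 1) ∈ Set.Ioc (0 : ℝ) (1 / 2) ∧ Tmap γ (y (n + 1)) = y n) →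
      ∃ υ1 υ2 : ℝ, 0 < υ2 ∧ υ2 ≤ υ1 ∧
        ∀ n : ℕ, 1 ≤ n →
          Real.exp (-υ1 * (n : ℝ) ^ γ) ≤ y n ∧ y n ≤ Real.exp (-υ2 * (n : ℝ) ^ γ) := by
  exact ⟨aux_mono hγ0 hγ1, aux_bij hγ0 hγ1, fun y hy0 hrec => aux_part3 hγ0 hγ1 y hy0 hrec⟩
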